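/- Mean photon number of the imperfect cubic phase state: with ψ_s as in Eq. (14), N_S := (1/4)∫(|2ψ_s'(q)|² + q²|ψ_s(q)|²) dq - 1/2 equals (1/2)(cosh(2s) - 1) + 18γ²e^{4s} + (1/4)(P + 6γe^{2s})². -/

import Mathlib

open MeasureTheory Real Complex Set

lemma integrable_pow_gauss {b : ℝ} (hb : 0 < b) (n : ℕ) :
    Integrable (fun x : ℝ => x ^ n * Real.exp (-b * x ^ 2)) := by
  simpa [Real.rpow_natCast] using
    integrable_rpow_mul_exp_neg_mul_sq hb (s := (n : ℝ))
      (lt_of_lt_of_le neg_one_lt_zero (Nat.cast_nonneg n))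

lemma int_pow_gauss {b : ℝ} (hb : 0 < b) (n : ℕ) (hn : Even n) :
    ∫ x : ℝ, x ^ n * Real.exp (-b * x ^ 2)
      = b ^ (-((n : ℝ) + 1) / 2) * Real.Gamma (((n : ℝ) + 1) / 2) := by
  have hIoi : ∫ x in Ioi (0:ℝ), x ^ n * Real.exp (-b * x ^ 2)
      = b ^ (-((n : ℝ) + 1) / 2) * (1 / 2) * Real.Gamma (((n : ℝ) + 1) / 2) := by
    simpa [Real.rpow_natCast] using
      _root_.integral_rpow_mul_exp_neg_mul_rpow (p := 2) (q := (n : ℝ)) (b := b)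
        two_pos (lt_of_lt_of_le neg_one_lt_zero (Nat.cast_nonneg n)) hb
  have hIic : ∫ x in Iic (0:ℝ), x ^ n * Real.exp (-b * x ^ 2)
      = ∫ x in Ioi (0:ℝ), x ^ n * Real.exp (-b * x ^ 2) := by
    rw [← neg_zero, ← integral_comp_neg_Iic]
    simp [hn.neg_pow]
  rw [← integral_add_compl (measurableSet_Ioi (a := (0:ℝ))) (integrable_pow_gauss hb n),
    compl_Ioi, hIic, hIoi]
  ring

lemma int_gauss2 {b : ℝ} (hb : 0 < b) :
    ∫ x : ℝ, x ^ 2 * Real.exp (-b * x ^ 2) = Real.sqrt (π / b) / (2 * b) := by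
  rw [int_pow_gauss hb 2 (by decide)]
  have h32 : Real.Gamma ((((2:ℕ) : ℝ) + 1) / 2) = Real.sqrt π / 2 := by
    rw [show ((((2:ℕ):ℝ) + 1) / 2 : ℝ) = 1/2 + 1 by norm_num,
      Real.Gamma_add_one (by norm_num), Real.Gamma_one_half_eq]
    ring
  rw [h32, show (-(((2:ℕ):ℝ) + 1) / 2 : ℝ) = -(1/2) + (-1) by norm_num,
    Real.rpow_add hb, Real.rpow_neg_one, Real.rpow_neg hb.le, ← Real.sqrt_eq_rpow,
    Real.sqrt_div (le_of_lt Real.pi_pos)]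
  have h1 : Real.sqrt b ≠ 0 := by positivity
  field_simp
  try tauto

lemma int_gauss4 {b : ℝ} (hb : 0 < b) :
    ∫ x : ℝ, x ^ 4 * Real.exp (-b * x ^ 2) = 3 * Real.sqrt (π / b) / (4 * b ^ 2) := by
  rw [int_pow_gauss hb 4 (by decide)]
  have h52 : Real.Gamma ((((4:ℕ) : ℝ) + 1) / 2) = 3 * Real.sqrt π / 4 := by
    rw [show ((((4:ℕ):ℝ) + 1) / 2 : ℝ) = (1/2 + 1) + 1 by norm_num,
      Real.Gamma_add_one (by norm_num), Real.Gamma_add_one (by norm_num),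
      Real.Gamma_one_half_eq]
    ring
  rw [h52, show (-(((4:ℕ):ℝ) + 1) / 2 : ℝ) = -(1/2) + (-1 + -1) by norm_num,
    Real.rpow_add hb, Real.rpow_add hb, Real.rpow_neg_one, Real.rpow_neg hb.le,
    ← Real.sqrt_eq_rpow, Real.sqrt_div (le_of_lt Real.pi_pos)]
  have h1 : Real.sqrt b ≠ 0 := by positivity
  field_simp
  try tauto

noncomputable def cubicPhaseWF (γ P s : ℝ) (q : ℝ) : ℂ :=
  ((2 * Real.pi * Real.exp (2 * s)) ^ (-(1 / 4 : ℝ)) : ℝ) *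
    Complex.exp (Complex.I * γ * q ^ 3 - q ^ 2 / (4 * Real.exp (2 * s))
      + Complex.I * P * q / 2)

theorem cubic_phase_mean_photon_number (γ P s : ℝ) :
    (1 / 4) * (∫ q : ℝ, ‖(2 : ℂ) * deriv (cubicPhaseWF γ P s) q‖ ^ 2
        + q ^ 2 * ‖cubicPhaseWF γ P s q‖ ^ 2) - 1 / 2
      = (1 / 2) * (Real.cosh (2 * s) - 1) + 18 * γ ^ 2 * Real.exp (4 * s)
        + (1 / 4) * (P + 6 * γ * Real.exp (2 * s)) ^ 2 := by
  set E : ℝ := Real.exp (2 * s) with hE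
  have hE0 : 0 < E := Real.exp_pos _
  set T : ℝ := 2 * π * E with hT
  have hT0 : 0 < T := by positivity
  set r : ℝ := T ^ (-(1 / 4 : ℝ)) with hr
  have hr0 : 0 < r := Real.rpow_pos_of_pos hT0 _
  set b : ℝ := 1 / (2 * E) with hb
  have hb0 : 0 < b := by positivity
  have hψfun : cubicPhaseWF γ P s = fun q : ℝ =>
      (r : ℂ) * Complex.exp (Complex.I * (γ:ℂ) * (q:ℂ) ^ 3 - (q:ℂ) ^ 2 / (4 * (E:ℂ))
        + Complex.I * (P:ℂ) * (q:ℂ) / 2) := rfl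
  have hEC : ((E:ℂ)) ≠ 0 := Complex.ofReal_ne_zero.mpr hE0.ne'
  -- pointwise identity for the integrand
  have key : ∀ q : ℝ,
      ‖(2 : ℂ) * deriv (cubicPhaseWF γ P s) q‖ ^ 2 + q ^ 2 * ‖cubicPhaseWF γ P s q‖ ^ 2
      = T ^ (-(1/2 : ℝ)) * ((36 * γ ^ 2) * (q ^ 4 * Real.exp (-b * q ^ 2))
          + (12 * γ * P + 1 / E ^ 2 + 1) * (q ^ 2 * Real.exp (-b * q ^ 2))
          + P ^ 2 * Real.exp (-b * q ^ 2)) := by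
    intro q
    have h0 : HasDerivAt (fun x : ℝ => (x : ℂ)) 1 q := by
      simpa using (hasDerivAt_id q).ofReal_comp
    have h3 : HasDerivAt (fun x : ℝ => (x:ℂ) ^ 3) (3 * (q:ℂ) ^ 2) q := by
      have h := (h0.mul h0).mul h0
      have hfun : (fun x : ℝ => (x:ℂ) ^ 3) = fun x : ℝ => ((x:ℂ) * x) * x := by
        funext x; ring
      rw [hfun]
      exact h.congr_deriv (by simp; ring)
    have h2 : HasDerivAt (fun x : ℝ => (x:ℂ) ^ 2) (2 * (q:ℂ)) q := by
      have h := h0.mul h0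
      have hfun : (fun x : ℝ => (x:ℂ) ^ 2) = fun x : ℝ => (x:ℂ) * x := by
        funext x; ring
      rw [hfun]
      exact h.congr_deriv (by ring)
    have hd : HasDerivAt (fun x : ℝ => Complex.I * (γ:ℂ) * (x:ℂ) ^ 3 - (x:ℂ) ^ 2 / (4 * (E:ℂ))
        + Complex.I * (P:ℂ) * (x:ℂ) / 2)
        (Complex.I * (γ:ℂ) * (3 * (q:ℂ) ^ 2) - (2 * (q:ℂ)) / (4 * (E:ℂ))
          + Complex.I * (P:ℂ) / 2) q := by
      have hA := h3.const_mul (Complex.I * (γ:ℂ))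
      have hB := h2.div_const (4 * (E:ℂ))
      have hC := (h0.const_mul (Complex.I * (P:ℂ))).div_const 2
      exact ((hA.sub hB).add hC).congr_deriv (by ring)
    have hdψ : HasDerivAt (cubicPhaseWF γ P s)
        ((r : ℂ) * (Complex.exp (Complex.I * (γ:ℂ) * (q:ℂ) ^ 3 - (q:ℂ) ^ 2 / (4 * (E:ℂ))
            + Complex.I * (P:ℂ) * (q:ℂ) / 2)
          * (Complex.I * (γ:ℂ) * (3 * (q:ℂ) ^ 2) - (2 * (q:ℂ)) / (4 * (E:ℂ))
            + Complex.I * (P:ℂ) / 2))) q := by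
      rw [hψfun]
      exact hd.cexp.const_mul (r : ℂ)
    have hz : (Complex.I * (γ:ℂ) * (q:ℂ) ^ 3 - (q:ℂ) ^ 2 / (4 * (E:ℂ))
        + Complex.I * (P:ℂ) * (q:ℂ) / 2)
        = ((-(q ^ 2 / (4 * E)) : ℝ) : ℂ) + ((γ * q ^ 3 + P * q / 2 : ℝ) : ℂ) * Complex.I := by
      push_cast
      field_simp
      ring
    have hD : (Complex.I * (γ:ℂ) * (3 * (q:ℂ) ^ 2) - 2 * (q:ℂ) / (4 * (E:ℂ))
        + Complex.I * (P:ℂ) / 2)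
        = ((-(2 * q / (4 * E)) : ℝ) : ℂ) + ((3 * γ * q ^ 2 + P / 2 : ℝ) : ℂ) * Complex.I := by
      push_cast
      field_simp
      ring
    have hnormExp : ‖Complex.exp (Complex.I * (γ:ℂ) * (q:ℂ) ^ 3 - (q:ℂ) ^ 2 / (4 * (E:ℂ))
        + Complex.I * (P:ℂ) * (q:ℂ) / 2)‖ = Real.exp (-(q ^ 2 / (4 * E))) := by
      rw [hz, Complex.exp_add, norm_mul,
        Complex.norm_exp_ofReal, Complex.norm_exp_ofReal_mul_I, mul_one]
    have hexpsq : Real.exp (-(q ^ 2 / (4 * E))) ^ 2 = Real.exp (-b * q ^ 2) := by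
      rw [sq, ← Real.exp_add, hb]
      congr 1
      field_simp
      ring
    have hnormD : ‖(Complex.I * (γ:ℂ) * (3 * (q:ℂ) ^ 2) - 2 * (q:ℂ) / (4 * (E:ℂ))
        + Complex.I * (P:ℂ) / 2)‖ ^ 2
        = (2 * q / (4 * E)) ^ 2 + (3 * γ * q ^ 2 + P / 2) ^ 2 := by
      rw [hD, Complex.sq_norm, Complex.normSq_add_mul_I]
      ring
    have hnψ : ‖cubicPhaseWF γ P s q‖ ^ 2 = r ^ 2 * Real.exp (-b * q ^ 2) := by
      simp only [hψfun]
      rw [norm_mul, hnormExp, Complex.norm_real, Real.norm_eq_abs, abs_of_pos hr0,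
        mul_pow, hexpsq]
    have hnd : ‖(2 : ℂ) * deriv (cubicPhaseWF γ P s) q‖ ^ 2
        = 4 * (r ^ 2 * Real.exp (-b * q ^ 2))
            * ((2 * q / (4 * E)) ^ 2 + (3 * γ * q ^ 2 + P / 2) ^ 2) := by
      rw [hdψ.deriv, norm_mul, norm_mul, norm_mul, hnormExp, Complex.norm_real,
        Real.norm_eq_abs, abs_of_pos hr0]
      rw [mul_pow, mul_pow, mul_pow, hnormD, hexpsq,
        show ‖(2:ℂ)‖ = 2 from by norm_num]
      ring
    rw [hnd, hnψ]
    have hr2 : r ^ 2 = T ^ (-(1/2 : ℝ)) := by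
      rw [hr, ← Real.rpow_natCast (T ^ (-(1/4:ℝ))) 2, ← Real.rpow_mul hT0.le]
      norm_num
    rw [hr2, hb]
    field_simp
    ring
  -- compute the integral
  have hsplit : ∫ q : ℝ, ((36 * γ ^ 2) * (q ^ 4 * Real.exp (-b * q ^ 2))
          + (12 * γ * P + 1 / E ^ 2 + 1) * (q ^ 2 * Real.exp (-b * q ^ 2))
          + P ^ 2 * Real.exp (-b * q ^ 2))
      = (36 * γ ^ 2) * (∫ q : ℝ, q ^ 4 * Real.exp (-b * q ^ 2))
        + (12 * γ * P + 1 / E ^ 2 + 1) * (∫ q : ℝ, q ^ 2 * Real.exp (-b * q ^ 2))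
        + P ^ 2 * (∫ q : ℝ, Real.exp (-b * q ^ 2)) := by
    have i4 : Integrable (fun q : ℝ => (36 * γ ^ 2) * (q ^ 4 * Real.exp (-b * q ^ 2))) :=
      (integrable_pow_gauss hb0 4).const_mul _
    have i2 : Integrable (fun q : ℝ =>
        (12 * γ * P + 1 / E ^ 2 + 1) * (q ^ 2 * Real.exp (-b * q ^ 2))) :=
      (integrable_pow_gauss hb0 2).const_mul _
    have i0 : Integrable (fun q : ℝ => P ^ 2 * Real.exp (-b * q ^ 2)) :=
      (integrable_exp_neg_mul_sq hb0).const_mul _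
    have i42 : Integrable (fun q : ℝ => (36 * γ ^ 2) * (q ^ 4 * Real.exp (-b * q ^ 2))
        + (12 * γ * P + 1 / E ^ 2 + 1) * (q ^ 2 * Real.exp (-b * q ^ 2))) := i4.add i2
    rw [integral_add i42 i0, integral_add i4 i2,
      integral_const_mul, integral_const_mul, integral_const_mul]
  have hCsqrt : T ^ (-(1/2 : ℝ)) * Real.sqrt (π / b) = 1 := by
    have hπb : π / b = T := by
      rw [hb, hT]
      field_simp
    rw [hπb, Real.sqrt_eq_rpow, ← Real.rpow_add hT0]
    norm_num
  simp only [key]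
  rw [integral_const_mul, hsplit, int_gauss4 hb0, int_gauss2 hb0, integral_gaussian]
  have hmain : T ^ (-(1/2 : ℝ)) * ((36 * γ ^ 2) * (3 * Real.sqrt (π / b) / (4 * b ^ 2))
      + (12 * γ * P + 1 / E ^ 2 + 1) * (Real.sqrt (π / b) / (2 * b))
      + P ^ 2 * Real.sqrt (π / b))
      = (T ^ (-(1/2 : ℝ)) * Real.sqrt (π / b)) * ((36 * γ ^ 2) * (3 / (4 * b ^ 2))
        + (12 * γ * P + 1 / E ^ 2 + 1) * (1 / (2 * b)) + P ^ 2) := by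
    ring
  rw [hmain, hCsqrt, one_mul]
  have hcosh : Real.cosh (2 * s) = (E + E⁻¹) / 2 := by
    rw [Real.cosh_eq, hE, Real.exp_neg]
  have hexp4 : Real.exp (4 * s) = E ^ 2 := by
    rw [hE, sq, ← Real.exp_add]
    congr 1
    ring
  rw [hcosh, hexp4, hb]
  field_simp
  ring
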